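/- Every completely positive map τ : M_n(ℂ) → M_m(ℂ) has a Kraus representation: there exist finitely many matrices V_i ∈ M_{m×n}(ℂ) such that τ(a) = Σᵢ Vᵢ a Vᵢ* for all a; consequently every completely positive map is decomposable and positive. -/

import Mathlib

open Matrix ComplexOrder

/-- The amplification `τ ⊗ id_r` of a linear map on matrix algebras. -/
def ampl {n m r : ℕ}
    (τ : Matrix (Fin n) (Fin n) ℂ →ₗ[ℂ] Matrix (Fin m) (Fin m) ℂ)
    (ρ : Matrix (Fin n × Fin r) (Fin n × Fin r) ℂ) :
    Matrix (Fin m × Fin r) (Fin m × Fin r) ℂ :=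
  Matrix.of fun p q => τ (Matrix.of fun i j => ρ (i, p.2) (j, q.2)) p.1 q.1

/-- Complete positivity of a linear map between matrix algebras: all amplifications
preserve positive semidefiniteness. -/
def IsCP {n m : ℕ}
    (τ : Matrix (Fin n) (Fin n) ℂ →ₗ[ℂ] Matrix (Fin m) (Fin m) ℂ) : Prop :=
  ∀ (r : ℕ) (ρ : Matrix (Fin n × Fin r) (Fin n × Fin r) ℂ),
    ρ.PosSemidef → (ampl τ ρ).PosSemidef

/-- The transposition map as a linear map on `M_n(ℂ)`. -/
def transposeMap {n : ℕ} : Matrix (Fin n) (Fin n) ℂ →ₗ[ℂ] Matrix (Fin n) (Fin n) ℂ where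
  toFun a := aᵀ
  map_add' a b := Matrix.transpose_add a b
  map_smul' c a := Matrix.transpose_smul c a

lemma kraus_aux {n m : ℕ}
    (τ : Matrix (Fin n) (Fin n) ℂ →ₗ[ℂ] Matrix (Fin m) (Fin m) ℂ)
    (hτ : IsCP τ) :
    ∃ (N : ℕ) (V : Fin N → Matrix (Fin m) (Fin n) ℂ),
      ∀ a : Matrix (Fin n) (Fin n) ℂ, τ a = ∑ i, V i * a * (V i)ᴴ := by
  classical
  set ρ0 : Matrix (Fin n × Fin n) (Fin n × Fin n) ℂ :=
    Matrix.of fun p q => (if p.1 = p.2 then (1:ℂ) else 0) * (if q.1 = q.2 then (1:ℂ) else 0)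
    with hρ0def
  have hρ0 : ρ0.PosSemidef := by
    have : ρ0 = (Matrix.of fun (_ : Fin 1) (q : Fin n × Fin n) =>
        if q.1 = q.2 then (1:ℂ) else 0)ᴴ *
        (Matrix.of fun (_ : Fin 1) (q : Fin n × Fin n) => if q.1 = q.2 then (1:ℂ) else 0) := by
      ext p q
      simp only [Matrix.mul_apply, Matrix.conjTranspose_apply, Matrix.of_apply, ρ0,
        Fin.sum_univ_one]
      split_ifs <;> simp
    rw [this]
    exact Matrix.posSemidef_conjTranspose_mul_self _
  have hC := hτ n ρ0 hρ0
  obtain ⟨B, hB⟩ := (by open MatrixOrder in exact (CStarAlgebra.nonneg_iff_eq_star_mul_self.mp hC.nonneg).imp fun B h => h.trans (by rw [Matrix.star_eq_conjTranspose]) : ∃ B : Matrix (Fin m × Fin n) (Fin m × Fin n) ℂ, ampl τ ρ0 = Bᴴ * B)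
  -- Choi matrix entries
  have hChoi : ∀ (p q : Fin m) (i j : Fin n),
      ampl τ ρ0 (p, i) (q, j) = τ (Matrix.single i j 1) p q := by
    intro p q i j
    have hmat : (Matrix.of fun i' j' => ρ0 (i', i) (j', j)) = Matrix.single i j 1 := by
      ext i' j'
      simp only [Matrix.of_apply, ρ0, Matrix.single]
      rcases eq_or_ne i i' with rfl | h1 <;> rcases eq_or_ne j j' with rfl | h2 <;>
        simp_all [Ne.symm]
    show τ (Matrix.of fun i' j' => ρ0 (i', i) (j', j)) p q = _
    rw [hmat]
  set W : Fin m × Fin n → Matrix (Fin m) (Fin n) ℂ :=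
    fun k => Matrix.of fun p a => star (B k (p, a)) with hW
  have key : ∀ a : Matrix (Fin n) (Fin n) ℂ, τ a = ∑ k, W k * a * (W k)ᴴ := by
    intro a
    have ha : τ a = ∑ i : Fin n, ∑ j : Fin n, a i j • τ (Matrix.single i j 1) := by
      conv_lhs => rw [Matrix.matrix_eq_sum_single a]
      rw [map_sum]
      refine Finset.sum_congr rfl fun i _ => ?_
      rw [map_sum]
      refine Finset.sum_congr rfl fun j _ => ?_
      rw [show Matrix.single i j (a i j) = a i j • Matrix.single i j (1:ℂ) by
        rw [Matrix.smul_single, smul_eq_mul, mul_one], _root_.map_smul]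
    ext p q
    rw [ha]
    have hBC : ∀ (i j : Fin n), τ (Matrix.single i j 1) p q
        = ∑ k, star (B k (p, i)) * B k (q, j) := by
      intro i j
      rw [← hChoi p q i j, hB]
      simp [Matrix.mul_apply, Matrix.conjTranspose_apply]
    have e1 : ∀ k : Fin m × Fin n, (W k * a * (W k)ᴴ) p q
        = ∑ i, ∑ j, a i j * (star (B k (p, i)) * B k (q, j)) := by
      intro k
      simp only [Matrix.mul_apply, Matrix.conjTranspose_apply, hW, Matrix.of_apply,
        star_star, Finset.sum_mul]
      rw [Finset.sum_comm]
      exact Finset.sum_congr rfl fun i _ => Finset.sum_congr rfl fun j _ => by ring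
    simp only [Matrix.sum_apply, Matrix.smul_apply, smul_eq_mul, hBC, Finset.mul_sum, e1]
    have e2 : ∀ (i : Fin n),
        (∑ j, ∑ k : Fin m × Fin n, a i j * (star (B k (p, i)) * B k (q, j)))
        = ∑ k : Fin m × Fin n, ∑ j, a i j * (star (B k (p, i)) * B k (q, j)) :=
      fun i => Finset.sum_comm
    simp_rw [e2]
    exact Finset.sum_comm
  refine ⟨Fintype.card (Fin m × Fin n),
    fun i => W ((Fintype.equivFin (Fin m × Fin n)).symm i), fun a => ?_⟩
  rw [key a, ← Equiv.sum_comp (Fintype.equivFin (Fin m × Fin n)).symm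
    (fun k => W k * a * (W k)ᴴ)]

theorem kraus_representation {n m : ℕ}
    (τ : Matrix (Fin n) (Fin n) ℂ →ₗ[ℂ] Matrix (Fin m) (Fin m) ℂ)
    (hτ : IsCP τ) :
    (∃ (N : ℕ) (V : Fin N → Matrix (Fin m) (Fin n) ℂ),
      ∀ a : Matrix (Fin n) (Fin n) ℂ, τ a = ∑ i, V i * a * (V i)ᴴ) ∧
    (∃ τ₁ τ₂ : Matrix (Fin n) (Fin n) ℂ →ₗ[ℂ] Matrix (Fin m) (Fin m) ℂ,
      IsCP τ₁ ∧ IsCP τ₂ ∧ τ = τ₁ + τ₂ ∘ₗ transposeMap) ∧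
    (∀ a : Matrix (Fin n) (Fin n) ℂ, a.PosSemidef → (τ a).PosSemidef) := by
  obtain ⟨N, V, hV⟩ := kraus_aux τ hτ
  have hzero : IsCP (0 : Matrix (Fin n) (Fin n) ℂ →ₗ[ℂ] Matrix (Fin m) (Fin m) ℂ) := by
    intro r ρ hρ
    have : ampl (0 : Matrix (Fin n) (Fin n) ℂ →ₗ[ℂ] Matrix (Fin m) (Fin m) ℂ) ρ = 0 := by
      ext p q; simp [ampl]
    rw [this]
    exact Matrix.PosSemidef.zero
  refine ⟨⟨N, V, hV⟩, ⟨τ, 0, hτ, hzero, by simp⟩, fun a ha => ?_⟩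
  rw [hV a]
  exact Finset.sum_induction _ _ (fun x y hx hy => hx.add hy) Matrix.PosSemidef.zero
    (fun i _ => ha.mul_mul_conjTranspose_same (V i))
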